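/- Ordering of minimum type-II errors in the singly minimized setting (Lemma, Appendix B.1): Let A and B be nonempty finite types, ρ_AB a bipartite state on A × B with marginal ρ_A, n a positive natural number, and μ ≥ 0 a real number. Define three quantities, each an infimum over tests T on Fin n → (A × B) satisfying Re Tr[ρ_AB^{⊗n} · (1 − T)] ≤ μ: (1) β̂^iid_n(μ), where the objective is ⨆ over states τ_B on B of Re Tr[(ρ_A^{⊗n} ⊗ τ_B^{⊗n}) · T]; (2) β̂^sym_n(μ), where the objective is ⨆ over permutation-invariant states τ on Fin n → B of Re Tr[(ρ_A^{⊗n} ⊗ τ) · T]; (3) β̂^ind_n(μ), where the objective is ⨆ over all states τ on Fin n → B of Re Tr[(ρ_A^{⊗n} ⊗ τ) · T]. Then 0 ≤ β̂^iid_n(μ) ≤ β̂^sym_n(μ) = β̂^ind_n(μ) ≤ max 0 (1 − μ) ≤ 1. -/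

import Mathlib

open scoped BigOperators Kronecker ComplexOrder

noncomputable section

/-- Matrix power on the support via spectral decomposition (convention `0 ^ p = 0`);
junk value `0` for non-Hermitian matrices. -/
noncomputable def mpow {A : Type*} [Fintype A] [DecidableEq A] (X : Matrix A A ℂ) (p : ℝ) :
    Matrix A A ℂ :=
  if h : X.IsHermitian then
    (h.eigenvectorUnitary : Matrix A A ℂ) *
      Matrix.diagonal (fun i =>
        ((if h.eigenvalues i = 0 then (0 : ℝ) else (h.eigenvalues i) ^ p : ℝ) : ℂ)) *
      (star (h.eigenvectorUnitary : Matrix A A ℂ))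
  else 0

/-- Matrix logarithm via spectral decomposition (`Real.log 0 = 0`); junk value `0`
for non-Hermitian matrices. -/
noncomputable def mlog {A : Type*} [Fintype A] [DecidableEq A] (X : Matrix A A ℂ) :
    Matrix A A ℂ :=
  if h : X.IsHermitian then
    (h.eigenvectorUnitary : Matrix A A ℂ) *
      Matrix.diagonal (fun i => ((Real.log (h.eigenvalues i) : ℝ) : ℂ)) *
      (star (h.eigenvectorUnitary : Matrix A A ℂ))
  else 0

/-- A quantum state: a positive semidefinite matrix with unit trace. -/
structure MState (A : Type*) [Fintype A] [DecidableEq A] where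
  mat : Matrix A A ℂ
  posSemidef : mat.PosSemidef
  trace_one : mat.trace = 1

/-- `Q_α(ρ‖σ) = Tr[ρ^α σ^(1-α)]`. -/
noncomputable def QRenyi {A : Type*} [Fintype A] [DecidableEq A] (α : ℝ)
    (ρ σ : Matrix A A ℂ) : ℝ :=
  ((mpow ρ α * mpow σ (1 - α)).trace).re

/-- Petz Rényi divergence `D_α(ρ‖σ)`, valued in `(-∞,∞]`. -/
noncomputable def DRenyi {A : Type*} [Fintype A] [DecidableEq A] (α : ℝ)
    (ρ σ : Matrix A A ℂ) : EReal :=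
  if QRenyi α ρ σ = 0 then ⊤ else (((α - 1)⁻¹ * Real.log (QRenyi α ρ σ) : ℝ) : EReal)

-- Quantum relative entropy `D(ρ‖σ)`, valued in `(-∞,∞]`.
open Classical in
noncomputable def relEnt {A : Type*} [Fintype A] [DecidableEq A] (ρ σ : Matrix A A ℂ) : EReal :=
  if LinearMap.ker (Matrix.toLin' σ) ≤ LinearMap.ker (Matrix.toLin' ρ) then
    (((ρ * (mlog ρ - mlog σ)).trace).re : EReal)
  else ⊤

/-- Doubly minimized Petz Rényi lautum information. -/
noncomputable def Ldd {A B : Type*} [Fintype A] [DecidableEq A] [Fintype B] [DecidableEq B]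
    (α : ℝ) (ρ : Matrix (A × B) (A × B) ℂ) : EReal :=
  ⨅ (σ : MState A) (τ : MState B), DRenyi α (σ.mat ⊗ₖ τ.mat) ρ

/-- Tumula information. -/
noncomputable def Tum {A B : Type*} [Fintype A] [DecidableEq A] [Fintype B] [DecidableEq B]
    (ρ : Matrix (A × B) (A × B) ℂ) : EReal :=
  ⨅ (σ : MState A) (τ : MState B), relEnt (σ.mat ⊗ₖ τ.mat) ρ

/-- Partial trace over the first factor. -/
noncomputable def ptrA {A B : Type*} [Fintype A] (M : Matrix (A × B) (A × B) ℂ) :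
    Matrix B B ℂ :=
  Matrix.of fun b b' => ∑ a, M (a, b) (a, b')

/-- Partial trace over the second factor. -/
noncomputable def ptrB {A B : Type*} [Fintype B] (M : Matrix (A × B) (A × B) ℂ) :
    Matrix A A ℂ :=
  Matrix.of fun a a' => ∑ b, M (a, b) (a', b)


/-- `n`-fold tensor power of a matrix: `M^{⊗n} f g = ∏ i, M (f i) (g i)`. -/
noncomputable def tpow {Z : Type*} (M : Matrix Z Z ℂ) (n : ℕ) :
    Matrix (Fin n → Z) (Fin n → Z) ℂ :=
  Matrix.of fun f g => ∏ i, M (f i) (g i)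

/-- A test: a matrix `T` with `0 ≤ T ≤ 1` in the Loewner order. -/
def IsTest {Z : Type*} [Fintype Z] [DecidableEq Z] (T : Matrix Z Z ℂ) : Prop :=
  T.PosSemidef ∧ ((1 : Matrix Z Z ℂ) - T).PosSemidef

/-- Reindex a matrix on `(Fin n → A) × (Fin n → B)` to a matrix on `Fin n → A × B`
via the natural bijection. -/
noncomputable def prodReindex {A B : Type*} (n : ℕ)
    (M : Matrix ((Fin n → A) × (Fin n → B)) ((Fin n → A) × (Fin n → B)) ℂ) :
    Matrix (Fin n → A × B) (Fin n → A × B) ℂ :=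
  Matrix.reindex (Equiv.arrowProdEquivProdArrow (Fin n) (fun _ => A) (fun _ => B)).symm
    (Equiv.arrowProdEquivProdArrow (Fin n) (fun _ => A) (fun _ => B)).symm M

/-- Tests on `Fin n → A × B` whose type-I error with respect to `ρ^{⊗n}` is at most `μ`. -/
def Feasible {A B : Type*} [Fintype A] [DecidableEq A] [Fintype B] [DecidableEq B]
    (ρ : MState (A × B)) (n : ℕ) (μ : ℝ) : Type _ :=
  {T : Matrix (Fin n → A × B) (Fin n → A × B) ℂ //
    IsTest T ∧ ((tpow ρ.mat n) * (1 - T)).trace.re ≤ μ}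

/-- A matrix on `Fin n → B` is permutation invariant if reindexing rows and columns by
`f ↦ f ∘ π` leaves it unchanged, for every permutation `π` of `Fin n`. -/
def PermInv {n : ℕ} {B : Type*} (τ : Matrix (Fin n → B) (Fin n → B) ℂ) : Prop :=
  ∀ (π : Equiv.Perm (Fin n)) (f g : Fin n → B), τ (f ∘ π) (g ∘ π) = τ f g

/-- Minimum type-II error, i.i.d. alternative hypotheses `{ρ_A^{⊗n} ⊗ τ_B^{⊗n}}`. -/
noncomputable def betaIid {A B : Type*} [Fintype A] [DecidableEq A] [Fintype B]
    [DecidableEq B] (ρ : MState (A × B)) (n : ℕ) (μ : ℝ) : ℝ :=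
  ⨅ T : Feasible ρ n μ, ⨆ τ : MState B,
    ((prodReindex n (tpow (ptrB ρ.mat) n ⊗ₖ tpow τ.mat n)) * T.1).trace.re

/-- Minimum type-II error, permutation-invariant alternative hypotheses. -/
noncomputable def betaSym {A B : Type*} [Fintype A] [DecidableEq A] [Fintype B]
    [DecidableEq B] (ρ : MState (A × B)) (n : ℕ) (μ : ℝ) : ℝ :=
  ⨅ T : Feasible ρ n μ, ⨆ τ : {τ : MState (Fin n → B) // PermInv τ.mat},
    ((prodReindex n (tpow (ptrB ρ.mat) n ⊗ₖ τ.1.mat)) * T.1).trace.re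

/-- Minimum type-II error, arbitrary alternative hypotheses on the `B` systems. -/
noncomputable def betaInd {A B : Type*} [Fintype A] [DecidableEq A] [Fintype B]
    [DecidableEq B] (ρ : MState (A × B)) (n : ℕ) (μ : ℝ) : ℝ :=
  ⨅ T : Feasible ρ n μ, ⨆ τ : MState (Fin n → B),
    ((prodReindex n (tpow (ptrB ρ.mat) n ⊗ₖ τ.mat)) * T.1).trace.re

namespace BetaAux

open Matrix

variable {Z W : Type*} [Fintype Z] [DecidableEq Z] [Fintype W] [DecidableEq W]

open scoped MatrixOrder in
lemma psd_eq_star_mul {P : Matrix Z Z ℂ} (hP : P.PosSemidef) : ∃ C : Matrix Z Z ℂ, P = Cᴴ * C := by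
  obtain ⟨B, rfl⟩ := CStarAlgebra.nonneg_iff_eq_star_mul_self.mp hP.nonneg
  exact ⟨B, rfl⟩

lemma diag_re_nonneg {P : Matrix Z Z ℂ} (hP : P.PosSemidef) (i : Z) : 0 ≤ (P i i).re := by
  have h2 := hP.dotProduct_mulVec_nonneg (Pi.single i 1)
  have h3 : star (Pi.single i 1 : Z → ℂ) ⬝ᵥ P *ᵥ (Pi.single i 1 : Z → ℂ) = P i i := by
    simp [dotProduct, Matrix.mulVec, Pi.single_apply, apply_ite, Finset.sum_ite_eq',
      mul_comm]
  rw [h3] at h2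
  exact (Complex.le_def.mp h2).1

lemma trace_re_nonneg {P : Matrix Z Z ℂ} (hP : P.PosSemidef) : 0 ≤ P.trace.re := by
  rw [Matrix.trace, Complex.re_sum]
  exact Finset.sum_nonneg fun i _ => diag_re_nonneg hP i

lemma trace_mul_re_nonneg {X T : Matrix Z Z ℂ} (hX : X.PosSemidef) (hT : T.PosSemidef) :
    0 ≤ (X * T).trace.re := by
  obtain ⟨C, rfl⟩ := psd_eq_star_mul hT
  rw [← Matrix.mul_assoc, Matrix.trace_mul_cycle]
  exact trace_re_nonneg (hX.mul_mul_conjTranspose_same C)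

lemma trace_mul_re_le {X T : Matrix Z Z ℂ} (hX : X.PosSemidef)
    (hT : ((1 : Matrix Z Z ℂ) - T).PosSemidef) : (X * T).trace.re ≤ X.trace.re := by
  have h := trace_mul_re_nonneg hX hT
  rw [Matrix.mul_sub, Matrix.mul_one, Matrix.trace_sub, Complex.sub_re] at h
  linarith

lemma psd_smul {P : Matrix Z Z ℂ} (hP : P.PosSemidef) {r : ℝ} (hr : 0 ≤ r) :
    ((r : ℂ) • P).PosSemidef := by
  refine Matrix.PosSemidef.of_dotProduct_mulVec_nonneg ?_ fun x => ?_
  · rw [Matrix.IsHermitian, Matrix.conjTranspose_smul, hP.1.eq, Complex.star_def,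
      Complex.conj_ofReal]
  · rw [Matrix.smul_mulVec, dotProduct_smul, smul_eq_mul]
    exact mul_nonneg (by exact_mod_cast Complex.zero_le_real.mpr hr) (hP.dotProduct_mulVec_nonneg x)

lemma psd_sum {ι : Type*} (s : Finset ι) (f : ι → Matrix Z Z ℂ)
    (h : ∀ i ∈ s, (f i).PosSemidef) : (∑ i ∈ s, f i).PosSemidef :=
  Finset.sum_induction f _ (fun _ _ ha hb => ha.add hb) Matrix.PosSemidef.zero h

lemma kron_conjTranspose (M : Matrix Z Z ℂ) (N : Matrix W W ℂ) :
    (M ⊗ₖ N)ᴴ = Mᴴ ⊗ₖ Nᴴ := by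
  ext ⟨a, b⟩ ⟨c, d⟩
  simp [Matrix.conjTranspose_apply, Matrix.kroneckerMap_apply, mul_comm]

lemma kron_posSemidef {M : Matrix Z Z ℂ} {N : Matrix W W ℂ}
    (hM : M.PosSemidef) (hN : N.PosSemidef) : (M ⊗ₖ N).PosSemidef := by
  obtain ⟨C, rfl⟩ := psd_eq_star_mul hM
  obtain ⟨D, rfl⟩ := psd_eq_star_mul hN
  rw [Matrix.mul_kronecker_mul, ← kron_conjTranspose]
  exact Matrix.posSemidef_conjTranspose_mul_self _

lemma tpow_mul (P Q : Matrix Z Z ℂ) (n : ℕ) : tpow (P * Q) n = tpow P n * tpow Q n := by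
  ext f g
  simp only [tpow, Matrix.of_apply, Matrix.mul_apply]
  rw [Fintype.prod_sum fun i k => P (f i) k * Q k (g i)]
  exact Finset.sum_congr rfl fun h _ => Finset.prod_mul_distrib

lemma tpow_conjTranspose (M : Matrix Z Z ℂ) (n : ℕ) : tpow Mᴴ n = (tpow M n)ᴴ := by
  ext f g
  simp only [tpow, Matrix.of_apply, Matrix.conjTranspose_apply]
  rw [star_prod]

lemma tpow_posSemidef {M : Matrix Z Z ℂ} (hM : M.PosSemidef) (n : ℕ) :
    (tpow M n).PosSemidef := by
  obtain ⟨C, rfl⟩ := psd_eq_star_mul hM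
  rw [tpow_mul, tpow_conjTranspose]
  exact Matrix.posSemidef_conjTranspose_mul_self _

lemma tpow_trace (M : Matrix Z Z ℂ) (n : ℕ) : (tpow M n).trace = M.trace ^ n := by
  simp only [Matrix.trace, Matrix.diag, tpow, Matrix.of_apply]
  exact ((Fintype.prod_sum fun (_ : Fin n) k => M k k).symm).trans
    (by simp [Finset.prod_const])

lemma tpow_permInv (M : Matrix Z Z ℂ) (n : ℕ) : PermInv (tpow M n) := by
  intro π f g
  simp only [tpow, Matrix.of_apply, Function.comp_apply]
  exact Equiv.prod_comp π fun i => M (f i) (g i)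

lemma trace_submatrix_equiv' (e : W ≃ Z) (M : Matrix Z Z ℂ) :
    (M.submatrix e e).trace = M.trace :=
  Fintype.sum_equiv e _ _ fun _ => rfl

lemma trace_submatrix_mul (e : W ≃ Z) (X : Matrix Z Z ℂ) (T : Matrix W W ℂ) :
    (X.submatrix e e * T).trace = (X * T.submatrix e.symm e.symm).trace := by
  conv_lhs => rw [show T = (T.submatrix e.symm e.symm).submatrix e e from by ext; simp]
  rw [Matrix.submatrix_mul_equiv, trace_submatrix_equiv']

lemma trace_mul_submatrix (u : Z ≃ Z) (M T : Matrix Z Z ℂ) :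
    (M * T.submatrix u u).trace = (M.submatrix u.symm u.symm * T).trace := by
  conv_lhs => rw [show M = (M.submatrix u.symm u.symm).submatrix u u from by ext; simp]
  rw [Matrix.submatrix_mul_equiv, trace_submatrix_equiv']

lemma submatrix_sum {ι : Type*} (s : Finset ι) (f : ι → Matrix Z Z ℂ) (a b : W → Z) :
    (∑ i ∈ s, f i).submatrix a b = ∑ i ∈ s, (f i).submatrix a b := by
  ext x y
  simp [Matrix.submatrix_apply, Matrix.sum_apply]

/-- Precomposition with a permutation, as an equivalence of function types. -/
def permArr {Z : Type*} {n : ℕ} (π : Equiv.Perm (Fin n)) : (Fin n → Z) ≃ (Fin n → Z) :=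
  Equiv.arrowCongr π.symm (Equiv.refl Z)

lemma permArr_apply {Z : Type*} {n : ℕ} (π : Equiv.Perm (Fin n)) (f : Fin n → Z) :
    permArr π f = f ∘ π := rfl

lemma permArr_symm {Z : Type*} {n : ℕ} (π : Equiv.Perm (Fin n)) :
    (permArr (Z := Z) π).symm = permArr π⁻¹ := rfl

lemma permInv_submatrix {n : ℕ} {τ : Matrix (Fin n → Z) (Fin n → Z) ℂ} (h : PermInv τ)
    (π : Equiv.Perm (Fin n)) : τ.submatrix (permArr π) (permArr π) = τ := by
  ext f g
  exact h π f g

lemma ptrB_posSemidef {A' : Type*} [Fintype A'] [DecidableEq A']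
    {M : Matrix (A' × Z) (A' × Z) ℂ} (hM : M.PosSemidef) : (ptrB M).PosSemidef := by
  have key : ptrB M = ∑ b : Z,
      (Matrix.of fun (p : A' × Z) (a : A') => if p = (a, b) then (1 : ℂ) else 0)ᴴ * M *
        (Matrix.of fun (p : A' × Z) (a : A') => if p = (a, b) then (1 : ℂ) else 0) := by
    ext a a'
    simp only [Matrix.sum_apply, Matrix.mul_apply, Matrix.conjTranspose_apply, Matrix.of_apply,
      apply_ite (star : ℂ → ℂ), star_one, star_zero, ite_mul, one_mul, zero_mul, mul_ite,
      mul_one, mul_zero, Finset.sum_ite_eq', Finset.mem_univ, if_true, ptrB]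
  rw [key]
  exact psd_sum _ _ fun b _ => hM.conjTranspose_mul_mul_same _

lemma ptrB_trace {A' : Type*} [Fintype A'] (M : Matrix (A' × Z) (A' × Z) ℂ) :
    (ptrB M).trace = M.trace := by
  simp only [Matrix.trace, Matrix.diag, ptrB, Matrix.of_apply, Fintype.sum_prod_type]

lemma kron_submatrix_perm {A' B' : Type*} {n : ℕ}
    (σ : Matrix (Fin n → A') (Fin n → A') ℂ) (hσ : PermInv σ)
    (τ : Matrix (Fin n → B') (Fin n → B') ℂ) (π : Equiv.Perm (Fin n)) :
    ((σ ⊗ₖ τ).submatrix (Equiv.arrowProdEquivProdArrow (Fin n) (fun _ => A') (fun _ => B'))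
        (Equiv.arrowProdEquivProdArrow (Fin n) (fun _ => A') (fun _ => B'))).submatrix (permArr π) (permArr π)
      = (σ ⊗ₖ τ.submatrix (permArr π) (permArr π)).submatrix
          (Equiv.arrowProdEquivProdArrow (Fin n) (fun _ => A') (fun _ => B'))
          (Equiv.arrowProdEquivProdArrow (Fin n) (fun _ => A') (fun _ => B')) := by
  ext f g
  show σ ((fun c => (f c).1) ∘ π) ((fun c => (g c).1) ∘ π) *
      τ ((fun c => (f c).2) ∘ π) ((fun c => (g c).2) ∘ π)
    = σ (fun c => (f c).1) (fun c => (g c).1) *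
      τ ((fun c => (f c).2) ∘ π) ((fun c => (g c).2) ∘ π)
  rw [hσ π]

lemma permInv_avg {n : ℕ} (τ : Matrix (Fin n → Z) (Fin n → Z) ℂ) (c : ℂ) :
    PermInv (c • ∑ π : Equiv.Perm (Fin n), τ.submatrix (permArr π) (permArr π)) := by
  intro π₀ f g
  simp only [Matrix.smul_apply, Matrix.sum_apply, Matrix.submatrix_apply, permArr_apply]
  congr 1
  exact Fintype.sum_equiv (Equiv.mulLeft π₀) _ _ fun π => rfl

lemma trace_avg_mul {Z' : Type*} [Fintype Z'] [DecidableEq Z'] {n : ℕ}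
    {M : Matrix (Fin n → Z') (Fin n → Z') ℂ} (hM : PermInv M)
    (T : Matrix (Fin n → Z') (Fin n → Z') ℂ) (π : Equiv.Perm (Fin n)) :
    (M * T.submatrix (permArr π) (permArr π)).trace = (M * T).trace := by
  rw [trace_mul_submatrix (permArr π), permArr_symm, permInv_submatrix hM]

lemma trace_kron_mul_submatrix_perm {A' B' : Type*} [Fintype A'] [DecidableEq A']
    [Fintype B'] [DecidableEq B'] {n : ℕ}
    (σ : Matrix (Fin n → A') (Fin n → A') ℂ) (hσ : PermInv σ)
    (τ : Matrix (Fin n → B') (Fin n → B') ℂ)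
    (T : Matrix (Fin n → A' × B') (Fin n → A' × B') ℂ) (π : Equiv.Perm (Fin n)) :
    ((σ ⊗ₖ τ).submatrix (Equiv.arrowProdEquivProdArrow (Fin n) (fun _ => A') (fun _ => B'))
        (Equiv.arrowProdEquivProdArrow (Fin n) (fun _ => A') (fun _ => B')) *
          T.submatrix (permArr π) (permArr π)).trace
      = ((σ ⊗ₖ τ.submatrix (permArr π⁻¹) (permArr π⁻¹)).submatrix
          (Equiv.arrowProdEquivProdArrow (Fin n) (fun _ => A') (fun _ => B'))
          (Equiv.arrowProdEquivProdArrow (Fin n) (fun _ => A') (fun _ => B')) * T).trace := by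
  rw [trace_mul_submatrix (permArr π), permArr_symm, kron_submatrix_perm σ hσ τ π⁻¹]

lemma kron_smul_sum_submatrix {A' B' : Type*} {n : ℕ} {ι : Type*}
    (σ : Matrix (Fin n → A') (Fin n → A') ℂ) (c : ℂ) (s : Finset ι)
    (F : ι → Matrix (Fin n → B') (Fin n → B') ℂ) :
    (σ ⊗ₖ (c • ∑ i ∈ s, F i)).submatrix (Equiv.arrowProdEquivProdArrow (Fin n) (fun _ => A') (fun _ => B'))
        (Equiv.arrowProdEquivProdArrow (Fin n) (fun _ => A') (fun _ => B'))
      = c • ∑ i ∈ s, (σ ⊗ₖ F i).submatrix (Equiv.arrowProdEquivProdArrow (Fin n) (fun _ => A') (fun _ => B'))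
          (Equiv.arrowProdEquivProdArrow (Fin n) (fun _ => A') (fun _ => B')) := by
  ext f g
  simp only [Matrix.submatrix_apply, Matrix.kroneckerMap_apply, Matrix.smul_apply,
    Matrix.sum_apply, smul_eq_mul, Finset.mul_sum]
  exact Finset.sum_congr rfl fun i _ => by ring

/-- The uniform (maximally mixed) state. -/
noncomputable def uniformMState (Z : Type*) [Fintype Z] [DecidableEq Z] [Nonempty Z] :
    MState Z where
  mat := ((Fintype.card Z : ℂ))⁻¹ • 1
  posSemidef := by
    have h : ((Fintype.card Z : ℂ))⁻¹ = (((Fintype.card Z : ℝ)⁻¹ : ℝ) : ℂ) := by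
      push_cast; rfl
    rw [h]
    exact psd_smul Matrix.PosSemidef.one (by positivity)
  trace_one := by
    rw [Matrix.trace_smul, Matrix.trace_one, smul_eq_mul]
    exact inv_mul_cancel₀ (Nat.cast_ne_zero.mpr Fintype.card_ne_zero)

lemma permInv_uniform {n : ℕ} [Nonempty Z] : PermInv (uniformMState (Fin n → Z)).mat := by
  intro π f g
  have hiff : (f ∘ π = g ∘ π) ↔ f = g :=
    ⟨fun h => funext fun i => by simpa using congrFun h (π.symm i), fun h => by rw [h]⟩
  simp [uniformMState, Matrix.smul_apply, Matrix.one_apply, hiff]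

end BetaAux

/-- Ordering of minimum type-II errors in the singly minimized setting
(Lemma, Appendix B.1). -/
theorem beta_ordering {A B : Type*} [Fintype A] [DecidableEq A] [Nonempty A]
    [Fintype B] [DecidableEq B] [Nonempty B]
    (ρ : MState (A × B)) (n : ℕ) (hn : 0 < n) (μ : ℝ) (hμ : 0 ≤ μ) :
    0 ≤ betaIid ρ n μ ∧ betaIid ρ n μ ≤ betaSym ρ n μ ∧
      betaSym ρ n μ = betaInd ρ n μ ∧ betaInd ρ n μ ≤ max 0 (1 - μ) ∧
      max 0 (1 - μ) ≤ (1 : ℝ) := by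
  classical
  unfold betaIid betaSym betaInd
  have hprod : ∀ M : Matrix ((Fin n → A) × (Fin n → B)) ((Fin n → A) × (Fin n → B)) ℂ,
      prodReindex n M = M.submatrix (Equiv.arrowProdEquivProdArrow (Fin n) (fun _ => A) (fun _ => B))
        (Equiv.arrowProdEquivProdArrow (Fin n) (fun _ => A) (fun _ => B)) := fun M => rfl
  have hσ_psd : (tpow (ptrB ρ.mat) n).PosSemidef :=
    BetaAux.tpow_posSemidef (BetaAux.ptrB_posSemidef ρ.posSemidef) n
  have hσ_tr : (tpow (ptrB ρ.mat) n).trace = 1 := by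
    rw [BetaAux.tpow_trace, BetaAux.ptrB_trace, ρ.trace_one, one_pow]
  have hσ_perm : PermInv (tpow (ptrB ρ.mat) n) := BetaAux.tpow_permInv _ n
  have hρn_tr : (tpow ρ.mat n).trace = 1 := by
    rw [BetaAux.tpow_trace, ρ.trace_one, one_pow]
  have hρn_perm : PermInv (tpow ρ.mat n) := BetaAux.tpow_permInv _ n
  -- general value bounds
  have hval01 : ∀ X : Matrix (Fin n → B) (Fin n → B) ℂ, X.PosSemidef → X.trace = 1 →
      ∀ T : Feasible ρ n μ,
        0 ≤ (prodReindex n (tpow (ptrB ρ.mat) n ⊗ₖ X) * T.1).trace.re ∧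
          (prodReindex n (tpow (ptrB ρ.mat) n ⊗ₖ X) * T.1).trace.re ≤ 1 := by
    intro X hX hXtr T
    have hpsd : (prodReindex n (tpow (ptrB ρ.mat) n ⊗ₖ X)).PosSemidef := by
      rw [hprod]
      exact (BetaAux.kron_posSemidef hσ_psd hX).submatrix _
    have htr : (prodReindex n (tpow (ptrB ρ.mat) n ⊗ₖ X)).trace = 1 := by
      rw [hprod, BetaAux.trace_submatrix_equiv', Matrix.trace_kronecker, hσ_tr, hXtr, mul_one]
    refine ⟨BetaAux.trace_mul_re_nonneg hpsd T.2.1.1, ?_⟩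
    have h := BetaAux.trace_mul_re_le hpsd T.2.1.2
    rw [htr] at h
    simpa using h
  -- nonempty instances
  haveI : Nonempty (MState B) := ⟨BetaAux.uniformMState B⟩
  haveI : Nonempty (MState (Fin n → B)) := ⟨BetaAux.uniformMState _⟩
  haveI : Nonempty {τ : MState (Fin n → B) // PermInv τ.mat} :=
    ⟨⟨BetaAux.uniformMState _, BetaAux.permInv_uniform⟩⟩
  haveI : Nonempty (Feasible ρ n μ) :=
    ⟨⟨1, ⟨Matrix.PosSemidef.one, by rw [sub_self]; exact Matrix.PosSemidef.zero⟩,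
      by simpa using hμ⟩⟩
  have htpowState : ∀ τ : MState B, (tpow τ.mat n).PosSemidef ∧ (tpow τ.mat n).trace = 1 :=
    fun τ => ⟨BetaAux.tpow_posSemidef τ.posSemidef n,
      by rw [BetaAux.tpow_trace, τ.trace_one, one_pow]⟩
  -- boundedness of the suprema families
  have hbddInd : ∀ T : Feasible ρ n μ, BddAbove (Set.range fun τ : MState (Fin n → B) =>
      (prodReindex n (tpow (ptrB ρ.mat) n ⊗ₖ τ.mat) * T.1).trace.re) := fun T =>
    ⟨1, by rintro y ⟨τ, rfl⟩; exact (hval01 τ.mat τ.posSemidef τ.trace_one T).2⟩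
  have hbddSym : ∀ T : Feasible ρ n μ,
      BddAbove (Set.range fun τ : {τ : MState (Fin n → B) // PermInv τ.mat} =>
        (prodReindex n (tpow (ptrB ρ.mat) n ⊗ₖ τ.1.mat) * T.1).trace.re) := fun T =>
    ⟨1, by rintro y ⟨τ, rfl⟩; exact (hval01 τ.1.mat τ.1.posSemidef τ.1.trace_one T).2⟩
  have hbddIid : ∀ T : Feasible ρ n μ, BddAbove (Set.range fun τ : MState B =>
      (prodReindex n (tpow (ptrB ρ.mat) n ⊗ₖ tpow τ.mat n) * T.1).trace.re) := fun T =>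
    ⟨1, by rintro y ⟨τ, rfl⟩; exact (hval01 _ (htpowState τ).1 (htpowState τ).2 T).2⟩
  -- nonnegativity of the suprema
  have hsupInd0 : ∀ T : Feasible ρ n μ, 0 ≤ ⨆ τ : MState (Fin n → B),
      (prodReindex n (tpow (ptrB ρ.mat) n ⊗ₖ τ.mat) * T.1).trace.re := fun T =>
    le_trans (hval01 _ (BetaAux.uniformMState (Fin n → B)).posSemidef
        (BetaAux.uniformMState (Fin n → B)).trace_one T).1
      (le_ciSup (hbddInd T) (BetaAux.uniformMState (Fin n → B)))
  have hsupSym0 : ∀ T : Feasible ρ n μ, 0 ≤ ⨆ τ : {τ : MState (Fin n → B) // PermInv τ.mat},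
      (prodReindex n (tpow (ptrB ρ.mat) n ⊗ₖ τ.1.mat) * T.1).trace.re := fun T =>
    le_trans (hval01 _ (BetaAux.uniformMState (Fin n → B)).posSemidef
        (BetaAux.uniformMState (Fin n → B)).trace_one T).1
      (le_ciSup (hbddSym T) ⟨BetaAux.uniformMState (Fin n → B), BetaAux.permInv_uniform⟩)
  have hsupIid0 : ∀ T : Feasible ρ n μ, 0 ≤ ⨆ τ : MState B,
      (prodReindex n (tpow (ptrB ρ.mat) n ⊗ₖ tpow τ.mat n) * T.1).trace.re := fun T =>
    le_trans (hval01 _ (htpowState (BetaAux.uniformMState B)).1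
        (htpowState (BetaAux.uniformMState B)).2 T).1
      (le_ciSup (hbddIid T) (BetaAux.uniformMState B))
  -- bddBelow of infima families
  have hbbInd : BddBelow (Set.range fun T : Feasible ρ n μ => ⨆ τ : MState (Fin n → B),
      (prodReindex n (tpow (ptrB ρ.mat) n ⊗ₖ τ.mat) * T.1).trace.re) :=
    ⟨0, by rintro y ⟨T, rfl⟩; exact hsupInd0 T⟩
  have hbbSym : BddBelow (Set.range fun T : Feasible ρ n μ =>
      ⨆ τ : {τ : MState (Fin n → B) // PermInv τ.mat},
        (prodReindex n (tpow (ptrB ρ.mat) n ⊗ₖ τ.1.mat) * T.1).trace.re) :=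
    ⟨0, by rintro y ⟨T, rfl⟩; exact hsupSym0 T⟩
  have hbbIid : BddBelow (Set.range fun T : Feasible ρ n μ => ⨆ τ : MState B,
      (prodReindex n (tpow (ptrB ρ.mat) n ⊗ₖ tpow τ.mat n) * T.1).trace.re) :=
    ⟨0, by rintro y ⟨T, rfl⟩; exact hsupIid0 T⟩
  refine ⟨le_ciInf fun T => hsupIid0 T, ?_, ?_, ?_, max_le zero_le_one (by linarith)⟩
  · -- betaIid ≤ betaSym
    refine ciInf_mono hbbIid fun T => ?_
    refine ciSup_le fun τ => ?_
    exact le_ciSup (hbddSym T)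
      ⟨⟨tpow τ.mat n, (htpowState τ).1, (htpowState τ).2⟩, BetaAux.tpow_permInv _ n⟩
  · -- betaSym = betaInd
    refine le_antisymm (ciInf_mono hbbSym fun T => ciSup_le fun τ => le_ciSup (hbddInd T) τ.1) ?_
    refine le_ciInf fun T => ?_
    set c : ℝ := ((Fintype.card (Equiv.Perm (Fin n)) : ℝ))⁻¹ with hc
    have hcard0 : (Fintype.card (Equiv.Perm (Fin n)) : ℝ) ≠ 0 :=
      Nat.cast_ne_zero.mpr Fintype.card_ne_zero
    have hc0 : 0 ≤ c := by rw [hc]; positivity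
    have hcNℂ : (c : ℂ) * (Fintype.card (Equiv.Perm (Fin n)) : ℂ) = 1 := by
      rw [hc]; push_cast; exact inv_mul_cancel₀ (by exact_mod_cast hcard0)
    set S : Matrix (Fin n → A × B) (Fin n → A × B) ℂ :=
      (c : ℂ) • ∑ π : Equiv.Perm (Fin n),
        T.1.submatrix (BetaAux.permArr π) (BetaAux.permArr π) with hS
    have hsub1 : ∀ π : Equiv.Perm (Fin n),
        ((1 : Matrix (Fin n → A × B) (Fin n → A × B) ℂ) - T.1).submatrix
            (BetaAux.permArr π) (BetaAux.permArr π)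
          = 1 - T.1.submatrix (BetaAux.permArr π) (BetaAux.permArr π) := by
      intro π; ext f g
      simp [Matrix.submatrix_apply, Matrix.sub_apply, Matrix.one_apply,
        EmbeddingLike.apply_eq_iff_eq]
    have honeS : (1 : Matrix (Fin n → A × B) (Fin n → A × B) ℂ) - S
        = (c : ℂ) • ∑ π : Equiv.Perm (Fin n),
            ((1 : Matrix (Fin n → A × B) (Fin n → A × B) ℂ) - T.1).submatrix
              (BetaAux.permArr π) (BetaAux.permArr π) := by
      simp_rw [hsub1]
      rw [Finset.sum_sub_distrib, Finset.sum_const, Finset.card_univ, smul_sub, ← hS]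
      congr 1
      rw [← Nat.cast_smul_eq_nsmul ℂ, smul_smul, hcNℂ, one_smul]
    have hStest : IsTest S := by
      constructor
      · rw [hS]
        exact BetaAux.psd_smul (BetaAux.psd_sum _ _ fun π _ => T.2.1.1.submatrix _) hc0
      · rw [honeS]
        exact BetaAux.psd_smul (BetaAux.psd_sum _ _ fun π _ => T.2.1.2.submatrix _) hc0
    have hSfeas : (tpow ρ.mat n * (1 - S)).trace.re ≤ μ := by
      have hkey : (tpow ρ.mat n * (1 - S)).trace = (tpow ρ.mat n * (1 - T.1)).trace := by
        rw [honeS, mul_smul_comm, Finset.mul_sum, Matrix.trace_smul, Matrix.trace_sum]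
        simp_rw [BetaAux.trace_avg_mul hρn_perm]
        rw [Finset.sum_const, Finset.card_univ, smul_eq_mul, nsmul_eq_mul, ← mul_assoc,
          hcNℂ, one_mul]
      rw [hkey]; exact T.2.2
    refine le_trans (ciInf_le hbbInd (⟨S, hStest, hSfeas⟩ : Feasible ρ n μ)) ?_
    refine ciSup_le fun τ => ?_
    set τbar : Matrix (Fin n → B) (Fin n → B) ℂ :=
      (c : ℂ) • ∑ π : Equiv.Perm (Fin n),
        τ.mat.submatrix (BetaAux.permArr π) (BetaAux.permArr π) with hτbar
    have hτbar_psd : τbar.PosSemidef := by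
      rw [hτbar]
      exact BetaAux.psd_smul (BetaAux.psd_sum _ _ fun π _ => τ.posSemidef.submatrix _) hc0
    have hτbar_tr : τbar.trace = 1 := by
      rw [hτbar, Matrix.trace_smul, Matrix.trace_sum]
      simp_rw [BetaAux.trace_submatrix_equiv' (BetaAux.permArr _), τ.trace_one]
      rw [Finset.sum_const, Finset.card_univ, nsmul_eq_mul, mul_one, smul_eq_mul, hcNℂ]
    have hτbar_perm : PermInv τbar := by
      rw [hτbar]; exact BetaAux.permInv_avg τ.mat (c : ℂ)
    have hval : (prodReindex n (tpow (ptrB ρ.mat) n ⊗ₖ τ.mat) * S).trace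
        = (prodReindex n (tpow (ptrB ρ.mat) n ⊗ₖ τbar) * T.1).trace := by
      rw [hprod, hprod, hτbar, BetaAux.kron_smul_sum_submatrix, smul_mul_assoc,
        Finset.sum_mul, Matrix.trace_smul, Matrix.trace_sum, hS, mul_smul_comm,
        Finset.mul_sum, Matrix.trace_smul, Matrix.trace_sum]
      congr 1
      refine Fintype.sum_equiv (Equiv.inv (Equiv.Perm (Fin n))) _ _ fun π => ?_
      rw [BetaAux.trace_kron_mul_submatrix_perm _ hσ_perm]
      rfl
    have hgoal : (prodReindex n (tpow (ptrB ρ.mat) n ⊗ₖ τ.mat) * S).trace.re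
        = (prodReindex n (tpow (ptrB ρ.mat) n ⊗ₖ τbar) * T.1).trace.re := by rw [hval]
    refine le_trans (le_of_eq hgoal) ?_
    exact le_ciSup (hbddSym T) ⟨⟨τbar, hτbar_psd, hτbar_tr⟩, hτbar_perm⟩
  · -- betaInd ≤ max 0 (1 - μ)
    set d : ℝ := max 0 (1 - μ) with hd
    have hd0 : 0 ≤ d := le_max_left _ _
    have hd1 : d ≤ 1 := max_le zero_le_one (by linarith)
    have hdμ : 1 - μ ≤ d := le_max_right _ _
    have h1d : (1 : Matrix (Fin n → A × B) (Fin n → A × B) ℂ) - (d : ℂ) • 1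
        = (((1 - d : ℝ)) : ℂ) • 1 := by
      push_cast
      rw [sub_smul, one_smul]
    have hTd : IsTest ((d : ℂ) • (1 : Matrix (Fin n → A × B) (Fin n → A × B) ℂ)) :=
      ⟨BetaAux.psd_smul Matrix.PosSemidef.one hd0,
        by rw [h1d]; exact BetaAux.psd_smul Matrix.PosSemidef.one (by linarith)⟩
    have hTdfeas : (tpow ρ.mat n *
        ((1 : Matrix (Fin n → A × B) (Fin n → A × B) ℂ) - (d : ℂ) • 1)).trace.re ≤ μ := by
      rw [h1d, mul_smul_comm, Matrix.mul_one, Matrix.trace_smul, hρn_tr, smul_eq_mul, mul_one,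
        Complex.ofReal_re]
      linarith
    refine le_trans (ciInf_le hbbInd (⟨(d : ℂ) • 1, hTd, hTdfeas⟩ : Feasible ρ n μ)) ?_
    have hvald : ∀ τ : MState (Fin n → B),
        (prodReindex n (tpow (ptrB ρ.mat) n ⊗ₖ τ.mat) * ((d : ℂ) •
          (1 : Matrix (Fin n → A × B) (Fin n → A × B) ℂ))).trace.re = d := by
      intro τ
      rw [mul_smul_comm, Matrix.mul_one, Matrix.trace_smul, hprod,
        BetaAux.trace_submatrix_equiv', Matrix.trace_kronecker, hσ_tr, τ.trace_one, mul_one,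
        smul_eq_mul, mul_one, Complex.ofReal_re]
    have : (⨆ τ : MState (Fin n → B),
        (prodReindex n (tpow (ptrB ρ.mat) n ⊗ₖ τ.mat) * ((d : ℂ) •
          (1 : Matrix (Fin n → A × B) (Fin n → A × B) ℂ))).trace.re) = d := by
      simp only [hvald]
      exact ciSup_const
    exact le_of_eq this

end
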